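/- Let $A_1, \ldots, A_k \in \mathbb{Q}^*$ and let $W = \left(k + \sum_{s=1}^k A_s^2\right)\left(1 + \sum_{s=1}^k A_s^{-2}\right)$. Then all of $A_1, \ldots, A_k$ are squares of rational numbers if and only if there exists $x \in \mathbb{Q}$ such that $\prod_{\varepsilon_1, \ldots, \varepsilon_k \in \{\pm 1\}} \left(x + \sum_{s=1}^k \varepsilon_s \sqrt{A_s}\, W^{s-1}\right) = 0$, where $\sqrt{A_s}$ denotes a fixed complex square root of $A_s$ and the product is taken over all $2^k$ sign choices. -/

import Mathlib

open Finset Polynomial IntermediateField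

lemma nonvanish (W m M : ℝ) (hm : 0 < m) (hW : 1 < W) (hMm : M ≤ m * (W - 1))
    (n : ℕ) (b c : ℕ → ℂ)
    (hbm : ∀ s, s < n → m ≤ ‖b s‖) (hbM : ∀ s, s < n → ‖b s‖ ≤ M)
    (hc2 : ∀ s, s < n → ‖c s‖ ≤ 2)
    (t : ℕ) (ht : t < n) (hct : ‖c t‖ = 2)
    (htop : ∀ s, t < s → s < n → c s = 0) :
    ∑ s ∈ range n, c s * b s * (W : ℂ) ^ s ≠ 0 := by
  intro h0
  set f : ℕ → ℂ := fun s => c s * b s * (W : ℂ) ^ s with hf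
  have h1 : ∑ s ∈ range (t + 1), f s = ∑ s ∈ range n, f s := by
    apply Finset.sum_subset (Finset.range_subset_range.2 ht)
    intro x hx hx'
    have hx1 : x < n := Finset.mem_range.1 hx
    have hx2 : t < x := by
      rcases Nat.lt_or_ge x (t + 1) with h | h
      · exact absurd (Finset.mem_range.2 h) hx'
      · omega
    simp [hf, htop x hx2 hx1]
  have h2 : f t = -∑ s ∈ range t, f s := by
    have h3 := Finset.sum_range_succ f t
    rw [h1, h0] at h3
    linear_combination -h3
  have hWpos : (0 : ℝ) < W := lt_trans one_pos hW
  have hnormW : ∀ s : ℕ, ‖(W : ℂ) ^ s‖ = W ^ s := by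
    intro s
    rw [norm_pow, Complex.norm_real, Real.norm_eq_abs, abs_of_pos hWpos]
  set G : ℝ := ∑ s ∈ range t, W ^ s with hG
  have hGnn : 0 ≤ G := Finset.sum_nonneg fun s _ => pow_nonneg (le_of_lt hWpos) s
  have hgeom : G * (W - 1) = W ^ t - 1 := geom_sum_mul W t
  have hMnn : (0 : ℝ) ≤ M := le_trans (le_trans hm.le (hbm t ht)) (hbM t ht)
  have hup : ‖f t‖ ≤ 2 * M * G := by
    rw [h2, norm_neg]
    calc ‖∑ s ∈ range t, f s‖ ≤ ∑ s ∈ range t, ‖f s‖ := norm_sum_le _ _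
      _ ≤ ∑ s ∈ range t, 2 * M * W ^ s := by
          apply Finset.sum_le_sum
          intro s hs
          have hsn : s < n := lt_trans (Finset.mem_range.1 hs) ht
          rw [hf]
          simp only [norm_mul, hnormW]
          have h5 : ‖c s‖ * ‖b s‖ ≤ 2 * M :=
            mul_le_mul (hc2 s hsn) (hbM s hsn) (norm_nonneg _) (by norm_num)
          have h6 : (0:ℝ) ≤ W ^ s := pow_nonneg hWpos.le s
          nlinarith [norm_nonneg (c s), norm_nonneg (b s)]
      _ = 2 * M * G := by rw [hG, Finset.mul_sum]
  have hlow : 2 * m * W ^ t ≤ ‖f t‖ := by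
    rw [hf]
    simp only [norm_mul, hnormW, hct]
    have := hbm t ht
    have h6 : (0:ℝ) ≤ W ^ t := pow_nonneg hWpos.le t
    nlinarith
  have hMG : M * G ≤ m * (W ^ t - 1) := by
    have := mul_le_mul_of_nonneg_right hMm hGnn
    nlinarith
  nlinarith


theorem relation_combining (k : ℕ) (A : Fin k → ℚ) (hA : ∀ s, A s ≠ 0)
    (sq : Fin k → ℂ) (hsq : ∀ s, (sq s) ^ 2 = (A s : ℂ))
    (W : ℚ)
    (hW : W = ((k : ℚ) + ∑ s, (A s) ^ 2) * (1 + ∑ s, (A s)⁻¹ ^ 2)) :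
    (∀ s, ∃ r : ℚ, A s = r ^ 2) ↔
      ∃ x : ℚ, ∏ ε : Fin k → Bool,
        ((x : ℂ) + ∑ s, (if ε s then 1 else -1) * sq s * (W : ℂ) ^ (s : ℕ)) = 0 := by
  classical
  constructor
  · intro h
    choose r hr using h
    refine ⟨∑ s, r s * W ^ (s : ℕ), ?_⟩
    set ε0 : Fin k → Bool := fun s => if sq s = (r s : ℂ) then false else true with hε0
    apply Finset.prod_eq_zero (Finset.mem_univ ε0)
    have key : ∀ s, (if ε0 s then (1:ℂ) else -1) * sq s = -((r s : ℚ) : ℂ) := by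
      intro s
      by_cases h : sq s = (r s : ℂ)
      · simp [hε0, h]
      · have h2 : sq s = -((r s : ℚ) : ℂ) := by
          have h3 : (sq s - (r s : ℂ)) * (sq s + (r s : ℂ)) = 0 := by
            have h4 := hsq s
            rw [hr s] at h4
            push_cast at h4
            linear_combination h4
          rcases mul_eq_zero.1 h3 with h' | h'
          · exact absurd (by linear_combination h') h
          · linear_combination h'
        simp [hε0, h, h2]
    have hx : ((∑ s, r s * W ^ (s : ℕ) : ℚ) : ℂ) = ∑ s : Fin k, ((r s : ℂ)) * (W : ℂ) ^ (s : ℕ) := by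
      push_cast
      rfl
    rw [hx, ← Finset.sum_add_distrib]
    apply Finset.sum_eq_zero
    intro s _
    rw [show (if ε0 s then (1:ℂ) else -1) * sq s * (W:ℂ) ^ (s:ℕ)
        = ((if ε0 s then (1:ℂ) else -1) * sq s) * (W:ℂ) ^ (s:ℕ) from rfl, key s]
    ring
  · rintro ⟨x, hx⟩
    intro s0
    obtain ⟨ε, -, hε⟩ := Finset.prod_eq_zero_iff.1 hx
    set e : Fin k → ℂ := fun s => if ε s then 1 else -1 with he
    set b : Fin k → ℂ := fun s => e s * sq s with hb
    have he1 : ∀ s, e s = 1 ∨ e s = -1 := fun s => by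
      by_cases h : ε s <;> simp [he, h]
    have hbsq : ∀ s, (b s) ^ 2 = (A s : ℂ) := by
      intro s
      rcases he1 s with h | h <;>
        · rw [hb]; simp only [mul_pow, h]; rw [hsq s]; ring
    have hb0 : ∀ s, b s ≠ 0 := by
      intro s hzero
      have := hbsq s
      rw [hzero] at this
      simp at this
      exact hA s (by exact_mod_cast this.symm)
    have heq : (x : ℂ) + ∑ s, b s * (W : ℂ) ^ (s : ℕ) = 0 := hε
    -- rational bounds
    obtain ⟨P, hP⟩ : ∃ P : ℚ, P = (k : ℚ) + ∑ s, (A s) ^ 2 := ⟨_, rfl⟩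
    obtain ⟨Q, hQ⟩ : ∃ Q : ℚ, Q = 1 + ∑ s, (A s)⁻¹ ^ 2 := ⟨_, rfl⟩
    have hk1 : (1 : ℚ) ≤ (k : ℚ) := by
      have := s0.pos
      exact_mod_cast Nat.one_le_cast.2 this
    have hsumsq : ∀ s : Fin k, (A s) ^ 2 ≤ ∑ s, (A s) ^ 2 :=
      fun s => Finset.single_le_sum (fun i _ => sq_nonneg (A i)) (Finset.mem_univ s)
    have hsuminv : ∀ s : Fin k, (A s)⁻¹ ^ 2 ≤ ∑ s, (A s)⁻¹ ^ 2 :=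
      fun s => Finset.single_le_sum (fun i _ => sq_nonneg ((A i)⁻¹)) (Finset.mem_univ s)
    have hP1 : ∀ s, 1 + (A s) ^ 2 ≤ P := fun s => by
      have := hsumsq s; rw [hP]; linarith
    have hQ1 : ∀ s, 1 + (A s)⁻¹ ^ 2 ≤ Q := fun s => by
      have := hsuminv s; rw [hQ]; linarith
    have hQpos : 0 < Q := by
      linarith [hQ1 s0, sq_nonneg ((A s0)⁻¹)]
    have hPpos : 0 < P := by
      linarith [hP1 s0, sq_nonneg (A s0)]
    have habsP : ∀ s, |A s| ≤ P := by
      intro s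
      have h1 : |A s| ≤ 1 + (A s) ^ 2 := by nlinarith [sq_abs (A s), abs_nonneg (A s), sq_nonneg (|A s| - 1)]
      linarith [hP1 s]
    have habsQ : ∀ s, 1 / Q ≤ |A s| := by
      intro s
      have ha : 0 < |A s| := abs_pos.2 (hA s)
      have h1 : |A s|⁻¹ ≤ 1 + (A s)⁻¹ ^ 2 := by
        have h2 : |A s|⁻¹ = |(A s)⁻¹| := (abs_inv (A s)).symm
        rw [h2]
        nlinarith [sq_abs ((A s)⁻¹), abs_nonneg ((A s)⁻¹), sq_nonneg (|(A s)⁻¹| - 1)]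
      have h3 : |A s|⁻¹ ≤ Q := le_trans h1 (hQ1 s)
      rw [div_le_iff₀ hQpos]
      have h4 : |A s| * |A s|⁻¹ = 1 := mul_inv_cancel₀ ha.ne'
      nlinarith [mul_le_mul_of_nonneg_left h3 ha.le]
    have hWPQ : W = P * Q := by rw [hW, hP, hQ]
    have hW4 : (4 : ℚ) ≤ W := by
      have h1 := hP1 s0
      have h2 := hQ1 s0
      have ha : (0:ℚ) < (A s0) ^ 2 :=
        lt_of_le_of_ne (sq_nonneg _) (Ne.symm (pow_ne_zero 2 (hA s0)))
      have hc : (0:ℚ) < (A s0)⁻¹ ^ 2 :=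
        lt_of_le_of_ne (sq_nonneg _) (Ne.symm (pow_ne_zero 2 (inv_ne_zero (hA s0))))
      have hab : (A s0) ^ 2 * (A s0)⁻¹ ^ 2 = 1 := by
        rw [← mul_pow, mul_inv_cancel₀ (hA s0), one_pow]
      have h5 : (1 + (A s0) ^ 2) * (1 + (A s0)⁻¹ ^ 2) ≤ P * Q :=
        mul_le_mul h1 h2 (by linarith) (by linarith)
      nlinarith [mul_nonneg hc.le (sq_nonneg ((A s0) ^ 2 - 1))]
    -- real bounds
    have hQR : (0:ℝ) < (Q:ℝ) := by exact_mod_cast hQpos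
    have hPR : (0:ℝ) < (P:ℝ) := by exact_mod_cast hPpos
    have hWR4 : (4:ℝ) ≤ (W:ℝ) := by exact_mod_cast hW4
    obtain ⟨m, hm⟩ : ∃ m : ℝ, m = Real.sqrt (1/(Q:ℝ)) := ⟨_, rfl⟩
    obtain ⟨M, hM⟩ : ∃ M : ℝ, M = Real.sqrt (P:ℝ) := ⟨_, rfl⟩
    have hmpos : 0 < m := by
      rw [hm]; exact Real.sqrt_pos.2 (by positivity)
    have hnormb : ∀ s, ‖b s‖ = Real.sqrt |(A s : ℝ)| := by
      intro s
      have h1 : ‖b s‖ ^ 2 = |(A s : ℝ)| := by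
        rw [← norm_pow, hbsq s,
          show ((A s : ℚ) : ℂ) = (((A s : ℝ) : ℝ) : ℂ) by push_cast; rfl,
          Complex.norm_real, Real.norm_eq_abs]
      rw [← h1, Real.sqrt_sq (norm_nonneg _)]
    have hbm : ∀ s, m ≤ ‖b s‖ := by
      intro s
      rw [hnormb s, hm]
      apply Real.sqrt_le_sqrt
      have h2 : ((1/Q : ℚ) : ℝ) ≤ ((|A s| : ℚ) : ℝ) := by exact_mod_cast habsQ s
      rw [Rat.cast_abs] at h2
      calc (1:ℝ)/(Q:ℝ) = ((1/Q : ℚ) : ℝ) := by push_cast; ring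
        _ ≤ |(A s : ℝ)| := h2
    have hbM : ∀ s, ‖b s‖ ≤ M := by
      intro s
      rw [hnormb s, hM]
      apply Real.sqrt_le_sqrt
      have h2 : ((|A s| : ℚ) : ℝ) ≤ ((P : ℚ) : ℝ) := by exact_mod_cast habsP s
      rw [Rat.cast_abs] at h2
      exact h2
    have hMm : M ≤ m * ((W:ℝ) - 1) := by
      have hPQW : (P:ℝ) = (W:ℝ) * (1/(Q:ℝ)) := by
        have : (W:ℝ) = (P:ℝ) * (Q:ℝ) := by exact_mod_cast hWPQ
        field_simp [this]
        exact this.symm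
      have hMW : M = Real.sqrt (W:ℝ) * m := by
        rw [hM, hm, hPQW, Real.sqrt_mul (by linarith)]
      have hsW : Real.sqrt (W:ℝ) ≤ (W:ℝ) - 1 := by
        have h3 : (W:ℝ) ≤ ((W:ℝ) - 1)^2 := by nlinarith
        calc Real.sqrt (W:ℝ) ≤ Real.sqrt (((W:ℝ) - 1)^2) := Real.sqrt_le_sqrt h3
          _ = (W:ℝ) - 1 := Real.sqrt_sq (by linarith)
      calc M = Real.sqrt (W:ℝ) * m := hMW
        _ ≤ ((W:ℝ) - 1) * m := mul_le_mul_of_nonneg_right hsW hmpos.le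
        _ = m * ((W:ℝ) - 1) := mul_comm _ _
    have hW1 : (1:ℝ) < (W:ℝ) := by linarith
    -- Galois setup
    obtain ⟨p, hp⟩ : ∃ p : ℚ[X], p = ∏ s : Fin k, (X ^ 2 - C (A s)) := ⟨_, rfl⟩
    have hpne : p ≠ 0 := by
      rw [hp]
      apply Finset.prod_ne_zero_iff.2
      intro s _
      exact X_pow_sub_C_ne_zero (by norm_num) (A s)
    have hmemb : ∀ s, b s ∈ adjoin ℚ (p.rootSet ℂ) := by
      intro s
      apply subset_adjoin
      rw [Polynomial.mem_rootSet]
      refine ⟨hpne, ?_⟩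
      rw [hp, map_prod]
      apply Finset.prod_eq_zero (Finset.mem_univ s)
      simp [hbsq s]
    set K : IntermediateField ℚ ℂ := adjoin ℚ (p.rootSet ℂ) with hK
    haveI hsf : IsSplittingField ℚ K p :=
      adjoin_rootSet_isSplittingField (IsAlgClosed.splits (p.map (algebraMap ℚ ℂ)))
    haveI : FiniteDimensional ℚ K := Polynomial.IsSplittingField.finiteDimensional _ p
    haveI : Normal ℚ K := Normal.of_isSplittingField p
    haveI : IsGalois ℚ K := ⟨⟩
    set B : Fin k → K := fun s => ⟨b s, hmemb s⟩ with hB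
    have hBcoe : ∀ s, ((B s : K) : ℂ) = b s := fun s => rfl
    have hBsq : ∀ s, (B s) ^ 2 = algebraMap ℚ K (A s) := by
      intro s
      apply Subtype.ext
      show ((B s) ^ 2 : K).val = (algebraMap ℚ K (A s)).val
      rw [SubmonoidClass.coe_pow]
      rw [show ((algebraMap ℚ K (A s)).val : ℂ) = algebraMap ℚ ℂ (A s) from rfl]
      rw [eq_ratCast (algebraMap ℚ ℂ) (A s)]
      exact hbsq s
    set WK : K := algebraMap ℚ K W with hWK
    have hWKcoe : ((WK : K) : ℂ) = ((W : ℚ) : ℂ) := by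
      rw [hWK]
      rw [show ((algebraMap ℚ K W : K) : ℂ) = algebraMap ℚ ℂ W from rfl]
      exact eq_ratCast (algebraMap ℚ ℂ) W
    have push : ∀ v : Fin k → K,
        ((∑ s : Fin k, v s * WK ^ (s : ℕ) : K) : ℂ)
          = ∑ s : Fin k, ((v s : K) : ℂ) * ((W : ℚ) : ℂ) ^ (s : ℕ) := by
      intro v
      rw [show ((∑ s : Fin k, v s * WK ^ (s : ℕ) : K) : ℂ)
          = K.val (∑ s : Fin k, v s * WK ^ (s : ℕ)) from rfl, map_sum]
      apply Finset.sum_congr rfl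
      intro s _
      rw [map_mul, map_pow]
      rw [show K.val WK = ((W : ℚ) : ℂ) from hWKcoe]
      rfl
    obtain ⟨y, hy⟩ : ∃ y : K, y = ∑ s : Fin k, B s * WK ^ (s : ℕ) := ⟨_, rfl⟩
    have hycoe : ((y : K) : ℂ) = ∑ s : Fin k, b s * ((W : ℚ) : ℂ) ^ (s : ℕ) := by
      rw [hy, push B]
    have hyx : y = algebraMap ℚ K (-x) := by
      apply Subtype.ext
      show ((y : K) : ℂ) = ((algebraMap ℚ K (-x) : K) : ℂ)
      rw [hycoe, show ((algebraMap ℚ K (-x) : K) : ℂ) = algebraMap ℚ ℂ (-x) from rfl,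
        eq_ratCast (algebraMap ℚ ℂ) (-x)]
      push_cast
      linear_combination heq
    have hfix : ∀ (σ : K ≃ₐ[ℚ] K) (s : Fin k), σ (B s) = B s := by
      intro σ
      have hflip : ∀ s, σ (B s) = B s ∨ σ (B s) = -(B s) := by
        intro s
        have h1 : σ (B s) * σ (B s) = B s * B s := by
          have h2 : σ (B s) * σ (B s) = σ (B s * B s) := (map_mul σ _ _).symm
          have h3 : B s * B s = algebraMap ℚ K (A s) := by
            rw [← pow_two]; exact hBsq s
          rw [h2, h3, AlgEquiv.commutes]
        exact mul_self_eq_mul_self_iff.1 h1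
      by_contra hcon
      push_neg at hcon
      obtain ⟨t0, ht0⟩ := hcon
      set T : Finset (Fin k) := Finset.univ.filter (fun s => σ (B s) ≠ B s) with hT
      have hTne : T.Nonempty := ⟨t0, by simp [hT, ht0]⟩
      set t : Fin k := T.max' hTne with ht
      have htT : t ∈ T := T.max'_mem hTne
      have htflip : σ (B t) ≠ B t := by
        have h0 := htT; rw [hT, Finset.mem_filter] at h0; exact h0.2
      have hE : ∑ s : Fin k, ((σ (B s) : K) : ℂ) * ((W : ℚ) : ℂ) ^ (s : ℕ)
          = ∑ s : Fin k, b s * ((W : ℚ) : ℂ) ^ (s : ℕ) := by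
        have h1 : σ y = y := by rw [hyx]; exact σ.commutes (-x)
        have h2 : σ y = ∑ s : Fin k, σ (B s) * WK ^ (s : ℕ) := by
          rw [hy, map_sum]
          apply Finset.sum_congr rfl
          intro s _
          rw [map_mul, map_pow]
          have h4 : σ WK = WK := by rw [hWK]; exact σ.commutes W
          rw [h4]
        have h5 := congrArg (fun z : K => (z : ℂ)) (h2.symm.trans h1)
        rw [push (fun s => σ (B s)), hycoe] at h5
        exact h5
      set c : Fin k → ℂ := fun s => if σ (B s) = B s then 0 else 2 with hc
      have hsum0 : ∑ s : Fin k, c s * b s * ((W : ℚ) : ℂ) ^ (s : ℕ) = 0 := by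
        have hterm : ∀ s : Fin k, c s * b s * ((W : ℚ) : ℂ) ^ (s : ℕ)
            = b s * ((W : ℚ) : ℂ) ^ (s : ℕ)
              - ((σ (B s) : K) : ℂ) * ((W : ℚ) : ℂ) ^ (s : ℕ) := by
          intro s
          by_cases h : σ (B s) = B s
          · have h7 : ((σ (B s) : K) : ℂ) = b s := by rw [h, hBcoe]
            rw [hc]
            simp only [if_pos h, h7]
            ring
          · have h6 : σ (B s) = -(B s) := (hflip s).resolve_left h
            have h7 : ((σ (B s) : K) : ℂ) = -(b s) := by
              rw [h6, NegMemClass.coe_neg, hBcoe]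
            rw [hc]
            simp only [if_neg h, h7]
            ring
        rw [Finset.sum_congr rfl fun s _ => hterm s, Finset.sum_sub_distrib, hE, sub_self]
      apply nonvanish ((W : ℚ) : ℝ) m M hmpos hW1 hMm k
        (fun i => if h : i < k then b ⟨i, h⟩ else 0)
        (fun i => if h : i < k then c ⟨i, h⟩ else 0)
        ?_ ?_ ?_ (t : ℕ) t.2 ?_ ?_
      · refine Eq.trans ?_ hsum0
        rw [← Fin.sum_univ_eq_sum_range]
        apply Finset.sum_congr rfl
        intro i _
        show (if h : (i : ℕ) < k then c ⟨(i : ℕ), h⟩ else 0)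
            * (if h : (i : ℕ) < k then b ⟨(i : ℕ), h⟩ else 0) * _ = _
        rw [dif_pos i.2, dif_pos i.2, Fin.eta]
        norm_cast
      · intro s hs
        show m ≤ ‖if h : s < k then b ⟨s, h⟩ else 0‖
        rw [dif_pos hs]
        exact hbm _
      · intro s hs
        show ‖if h : s < k then b ⟨s, h⟩ else 0‖ ≤ M
        rw [dif_pos hs]
        exact hbM _
      · intro s hs
        show ‖if h : s < k then c ⟨s, h⟩ else 0‖ ≤ 2
        rw [dif_pos hs]
        by_cases h : σ (B ⟨s, hs⟩) = B ⟨s, hs⟩ <;> simp [hc, h]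
      · show ‖if h : (t : ℕ) < k then c ⟨(t : ℕ), h⟩ else 0‖ = 2
        rw [dif_pos t.2, Fin.eta]
        simp only [hc]
        rw [if_neg htflip]
        norm_num
      · intro s hs1 hs2
        show (if h : s < k then c ⟨s, h⟩ else 0) = 0
        rw [dif_pos hs2]
        have hfx : σ (B ⟨s, hs2⟩) = B ⟨s, hs2⟩ := by
          by_contra h9
          have h10 : (⟨s, hs2⟩ : Fin k) ∈ T := by
            rw [hT, Finset.mem_filter]; exact ⟨Finset.mem_univ _, h9⟩
          have h11 := T.le_max' _ h10
          rw [← ht] at h11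
          have h12 : s ≤ (t : ℕ) := h11
          omega
        simp [hc, hfx]
    have hfixed : B s0 ∈ IntermediateField.fixedField
        (IntermediateField.fixingSubgroup (⊥ : IntermediateField ℚ K)) :=
      fun g => hfix g.1 s0
    rw [IsGalois.fixedField_fixingSubgroup] at hfixed
    obtain ⟨q, hq⟩ := IntermediateField.mem_bot.1 hfixed
    refine ⟨q, ?_⟩
    have hcoeq := congrArg (fun z : K => (z : ℂ)) hq
    have hbq : b s0 = ((q : ℚ) : ℂ) := by
      rw [← hBcoe s0, ← hcoeq]
      exact (show ((algebraMap ℚ K q : K) : ℂ) = algebraMap ℚ ℂ q from rfl).trans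
        (eq_ratCast (algebraMap ℚ ℂ) q)
    have h12 := hbsq s0
    rw [hbq] at h12
    exact_mod_cast h12.symm
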